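/- arXiv:1312.3135 — 3 statements merged into one kernel-verified Lean document; each statement's English description precedes it below -/
import Mathlib

section
/- For every measurable function u: G → [0,∞) on an open set G ⊂ ℝⁿ with finite fractional seminorm |u|_{W^{δ,1}(G)}, the fractional coarea formula holds: (1/2)|u|_{W^{δ,1}(G)} = ∫₀^∞ P_δ({u > t}, G) dt, where P_δ(A,G) = ∫_A ∫_{G\A} |x−y|^{−n−δ} dy dx. -/
open MeasureTheory Set Metric Filter
open scoped ENNReal Topology

noncomputable def fracSemi (n : ℕ) (δ : ℝ) (G : Set (EuclideanSpace ℝ (Fin n)))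
    (u : EuclideanSpace ℝ (Fin n) → ℝ) : ℝ≥0∞ :=
  ∫⁻ x in G, ∫⁻ y in G, ENNReal.ofReal (|u x - u y| / ‖x - y‖ ^ ((n : ℝ) + δ))

noncomputable def fracPerim (n : ℕ) (δ : ℝ) (A G : Set (EuclideanSpace ℝ (Fin n))) : ℝ≥0∞ :=
  ∫⁻ x in A, ∫⁻ y in G \ A, ENNReal.ofReal (1 / ‖x - y‖ ^ ((n : ℝ) + δ))

noncomputable def fracCap (n : ℕ) (δ : ℝ) (K G : Set (EuclideanSpace ℝ (Fin n))) : ℝ≥0∞ :=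
  ⨅ (u : EuclideanSpace ℝ (Fin n) → ℝ) (_ : Continuous u ∧ HasCompactSupport u ∧
    tsupport u ⊆ G ∧ ∀ x ∈ K, 1 ≤ u x), fracSemi n δ G u

/-! ### Auxiliary definitions and lemmas -/

/-- The fractional kernel. -/
noncomputable def fcKer (n : ℕ) (δ : ℝ) (x y : EuclideanSpace ℝ (Fin n)) : ℝ≥0∞ :=
  ENNReal.ofReal (1 / ‖x - y‖ ^ ((n : ℝ) + δ))

lemma fcKer_symm (n : ℕ) (δ : ℝ) (x y : EuclideanSpace ℝ (Fin n)) :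
    fcKer n δ x y = fcKer n δ y x := by
  unfold fcKer
  rw [norm_sub_rev]

lemma fcKer_ne_top (n : ℕ) (δ : ℝ) (x y : EuclideanSpace ℝ (Fin n)) :
    fcKer n δ x y ≠ ⊤ := ENNReal.ofReal_ne_top

lemma fcKer_measurable (n : ℕ) (δ : ℝ) (hδ : 0 ≤ δ) :
    Measurable (Function.uncurry (fcKer n δ)) := by
  apply Measurable.ennreal_ofReal
  apply Measurable.const_div
  have hc : (0:ℝ) ≤ (n : ℝ) + δ := by positivity
  exact (Real.continuous_rpow_const hc).measurable.comp
    ((measurable_fst.sub measurable_snd).norm)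

lemma xorSet_eq (a b : ℝ) :
    {t : ℝ | Xor' (t < a) (t < b)} = Set.Ico (min a b) (max a b) := by
  ext t
  simp only [Set.mem_setOf_eq, Set.mem_Ico, Xor']
  constructor
  · rintro (⟨h1, h2⟩ | ⟨h1, h2⟩)
    · exact ⟨min_le_iff.2 (Or.inr (not_lt.1 h2)), lt_max_iff.2 (Or.inl h1)⟩
    · exact ⟨min_le_iff.2 (Or.inl (not_lt.1 h2)), lt_max_iff.2 (Or.inr h1)⟩
  · rintro ⟨h1, h2⟩
    rcases le_total a b with hab | hab
    · right
      rw [min_eq_left hab] at h1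
      rw [max_eq_right hab] at h2
      exact ⟨h2, not_lt.2 h1⟩
    · left
      rw [min_eq_right hab] at h1
      rw [max_eq_left hab] at h2
      exact ⟨h2, not_lt.2 h1⟩

lemma ofReal_abs_eq_lintegral (a b : ℝ) (ha : 0 ≤ a) (hb : 0 ≤ b) :
    ENNReal.ofReal |a - b| =
      ∫⁻ t in Set.Ioi (0:ℝ), ({t : ℝ | Xor' (t < a) (t < b)}).indicator 1 t := by
  rw [xorSet_eq, lintegral_indicator_one measurableSet_Ico,
      Measure.restrict_apply measurableSet_Ico]
  have h0 : (0:ℝ) ≤ min a b := le_min ha hb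
  have hle : volume (Set.Ico (min a b) (max a b) ∩ Set.Ioi 0)
      ≤ ENNReal.ofReal (max a b - min a b) := by
    calc volume (Set.Ico (min a b) (max a b) ∩ Set.Ioi 0)
        ≤ volume (Set.Ico (min a b) (max a b)) := measure_mono Set.inter_subset_left
      _ = ENNReal.ofReal (max a b - min a b) := Real.volume_Ico
  have hge : ENNReal.ofReal (max a b - min a b)
      ≤ volume (Set.Ico (min a b) (max a b) ∩ Set.Ioi 0) := by
    rw [← Real.volume_Ioo]
    exact measure_mono fun t ht => ⟨⟨ht.1.le, ht.2⟩, lt_of_le_of_lt h0 ht.1⟩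
  rw [← max_sub_min_eq_abs']
  exact (le_antisymm hle hge).symm

lemma key_slice (n : ℕ) (δ : ℝ) (hδ : 0 ≤ δ) (G : Set (EuclideanSpace ℝ (Fin n)))
    (hG : IsOpen G) (u : EuclideanSpace ℝ (Fin n) → ℝ) (hu : Measurable u) (t : ℝ) :
    (∫⁻ x in G, ∫⁻ y in G,
        ({s : ℝ | Xor' (s < u x) (s < u y)}).indicator 1 t * fcKer n δ x y)
      = 2 * fracPerim n δ {x ∈ G | t < u x} G := by
  have hKm := fcKer_measurable n δ hδ
  have hA : MeasurableSet {x ∈ G | t < u x} := hG.measurableSet.inter (hu measurableSet_Ioi)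
  have hGA : MeasurableSet (G \ {x ∈ G | t < u x}) := hG.measurableSet.diff hA
  have hAG : {x ∈ G | t < u x} ⊆ G := fun x hx => hx.1
  have hGsum : (volume : Measure (EuclideanSpace ℝ (Fin n))).restrict G
      = volume.restrict {x ∈ G | t < u x} + volume.restrict (G \ {x ∈ G | t < u x}) := by
    rw [← Measure.restrict_union Set.disjoint_sdiff_right hGA, Set.union_diff_cancel hAG]
  have hsplitX : ∀ f : EuclideanSpace ℝ (Fin n) → ℝ≥0∞,
      ∫⁻ x in G, f x = (∫⁻ x in {x ∈ G | t < u x}, f x)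
        + ∫⁻ x in G \ {x ∈ G | t < u x}, f x := by
    intro f
    rw [hGsum, lintegral_add_measure]
  have hset1 : {y : EuclideanSpace ℝ (Fin n) | ¬ t < u y} ∩ G = G \ {x ∈ G | t < u x} := by
    ext y
    constructor
    · rintro ⟨h1, h2⟩
      exact ⟨h2, fun hy => h1 hy.2⟩
    · rintro ⟨h1, h2⟩
      exact ⟨fun hlt => h2 ⟨h1, hlt⟩, h1⟩
  have hset2 : {y : EuclideanSpace ℝ (Fin n) | t < u y} ∩ G = {x ∈ G | t < u x} := by
    ext y
    exact ⟨fun h => ⟨h.2, h.1⟩, fun h => ⟨h.2, h.1⟩⟩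
  have hms1 : MeasurableSet {y : EuclideanSpace ℝ (Fin n) | ¬ t < u y} :=
    (hu measurableSet_Ioi).compl
  have hms2 : MeasurableSet {y : EuclideanSpace ℝ (Fin n) | t < u y} := hu measurableSet_Ioi
  have piece1 : (∫⁻ x in {x ∈ G | t < u x}, ∫⁻ y in G,
        ({s : ℝ | Xor' (s < u x) (s < u y)}).indicator 1 t * fcKer n δ x y)
      = ∫⁻ x in {x ∈ G | t < u x}, ∫⁻ y in G \ {x ∈ G | t < u x}, fcKer n δ x y := by
    refine setLIntegral_congr_fun hA (fun x hx => ?_)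
    have hxA : t < u x := hx.2
    have hpt : ∀ y, ({s : ℝ | Xor' (s < u x) (s < u y)}).indicator 1 t * fcKer n δ x y
        = ({y' : EuclideanSpace ℝ (Fin n) | ¬ t < u y'}).indicator
            (fun y' => fcKer n δ x y') y := by
      intro y
      by_cases h : t < u y
      · simp [Set.indicator_apply, Xor', hxA, h]
      · simp [Set.indicator_apply, Xor', hxA, h]
    rw [lintegral_congr hpt, lintegral_indicator hms1, Measure.restrict_restrict hms1, hset1]
  have piece2 : (∫⁻ x in G \ {x ∈ G | t < u x}, ∫⁻ y in G,
        ({s : ℝ | Xor' (s < u x) (s < u y)}).indicator 1 t * fcKer n δ x y)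
      = ∫⁻ x in G \ {x ∈ G | t < u x}, ∫⁻ y in {x ∈ G | t < u x}, fcKer n δ x y := by
    refine setLIntegral_congr_fun hGA (fun x hx => ?_)
    have hxA : ¬ t < u x := fun hlt => hx.2 ⟨hx.1, hlt⟩
    have hpt : ∀ y, ({s : ℝ | Xor' (s < u x) (s < u y)}).indicator 1 t * fcKer n δ x y
        = ({y' : EuclideanSpace ℝ (Fin n) | t < u y'}).indicator
            (fun y' => fcKer n δ x y') y := by
      intro y
      by_cases h : t < u y
      · simp [Set.indicator_apply, Xor', hxA, h]
      · simp [Set.indicator_apply, Xor', hxA, h]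
    rw [lintegral_congr hpt, lintegral_indicator hms2, Measure.restrict_restrict hms2, hset2]
  have hswap : (∫⁻ x in G \ {x ∈ G | t < u x}, ∫⁻ y in {x ∈ G | t < u x}, fcKer n δ x y)
      = ∫⁻ x in {x ∈ G | t < u x}, ∫⁻ y in G \ {x ∈ G | t < u x}, fcKer n δ x y := by
    rw [lintegral_lintegral_swap hKm.aemeasurable]
    exact lintegral_congr fun y => lintegral_congr fun x => fcKer_symm n δ x y
  calc (∫⁻ x in G, ∫⁻ y in G,
        ({s : ℝ | Xor' (s < u x) (s < u y)}).indicator 1 t * fcKer n δ x y)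
      = (∫⁻ x in {x ∈ G | t < u x}, ∫⁻ y in G,
          ({s : ℝ | Xor' (s < u x) (s < u y)}).indicator 1 t * fcKer n δ x y)
        + ∫⁻ x in G \ {x ∈ G | t < u x}, ∫⁻ y in G,
            ({s : ℝ | Xor' (s < u x) (s < u y)}).indicator 1 t * fcKer n δ x y := hsplitX _
    _ = 2 * fracPerim n δ {x ∈ G | t < u x} G := by
        rw [piece1, piece2, hswap, two_mul]
        rfl

theorem fractional_coarea (n : ℕ) (δ : ℝ) (hδ : 0 < δ) (hδ1 : δ < 1)
    (G : Set (EuclideanSpace ℝ (Fin n))) (hG : IsOpen G)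
    (u : EuclideanSpace ℝ (Fin n) → ℝ) (hu : Measurable u) (hu0 : ∀ x, 0 ≤ u x)
    (hfin : fracSemi n δ G u < ⊤) :
    fracSemi n δ G u = 2 * ∫⁻ t in Set.Ioi (0 : ℝ), fracPerim n δ {x ∈ G | t < u x} G := by
  classical
  have hKm := fcKer_measurable n δ hδ.le
  set E : (EuclideanSpace ℝ (Fin n) × EuclideanSpace ℝ (Fin n)) × ℝ → ℝ≥0∞ :=
    fun q => ({s : ℝ | Xor' (s < u q.1.1) (s < u q.1.2)}).indicator 1 q.2
      * fcKer n δ q.1.1 q.1.2 with hEdef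
  have hEm : Measurable E := by
    have hP : MeasurableSet {q : (EuclideanSpace ℝ (Fin n) × EuclideanSpace ℝ (Fin n)) × ℝ |
        q.2 < u q.1.1} := measurableSet_lt measurable_snd (hu.comp measurable_fst.fst)
    have hQ : MeasurableSet {q : (EuclideanSpace ℝ (Fin n) × EuclideanSpace ℝ (Fin n)) × ℝ |
        q.2 < u q.1.2} := measurableSet_lt measurable_snd (hu.comp measurable_fst.snd)
    have hEeq : E = Set.indicator
        ({q : (EuclideanSpace ℝ (Fin n) × EuclideanSpace ℝ (Fin n)) × ℝ | q.2 < u q.1.1} \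
          {q | q.2 < u q.1.2} ∪
         ({q | q.2 < u q.1.2} \ {q | q.2 < u q.1.1}))
        (fun q => fcKer n δ q.1.1 q.1.2) := by
      funext q
      by_cases h1 : q.2 < u q.1.1 <;> by_cases h2 : q.2 < u q.1.2 <;>
        simp [hEdef, Set.indicator_apply, Xor', h1, h2]
    rw [hEeq]
    exact (hKm.comp measurable_fst).indicator ((hP.diff hQ).union (hQ.diff hP))
  have h0 : fracSemi n δ G u
      = ∫⁻ x in G, ∫⁻ y in G, ENNReal.ofReal |u x - u y| * fcKer n δ x y := by
    unfold fracSemi fcKer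
    refine lintegral_congr fun x => lintegral_congr fun y => ?_
    rw [div_eq_mul_one_div, ENNReal.ofReal_mul (abs_nonneg _)]
  have h1 : ∀ x y : EuclideanSpace ℝ (Fin n),
      ENNReal.ofReal |u x - u y| * fcKer n δ x y
        = ∫⁻ s in Set.Ioi (0:ℝ), E ((x, y), s) := by
    intro x y
    rw [ofReal_abs_eq_lintegral (u x) (u y) (hu0 x) (hu0 y)]
    exact (lintegral_mul_const' (fcKer n δ x y) _ (fcKer_ne_top n δ x y)).symm
  have h2 : fracSemi n δ G u
      = ∫⁻ p, (∫⁻ s in Set.Ioi (0:ℝ), E (p, s))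
          ∂((volume.restrict G).prod (volume.restrict G)) := by
    rw [h0, lintegral_prod _ (hEm.lintegral_prod_right').aemeasurable]
    exact lintegral_congr fun x => lintegral_congr fun y => h1 x y
  have h3 : fracSemi n δ G u
      = ∫⁻ s in Set.Ioi (0:ℝ),
          ∫⁻ p, E (p, s) ∂((volume.restrict G).prod (volume.restrict G)) := by
    rw [h2]
    exact lintegral_lintegral_swap hEm.aemeasurable
  have h4 : ∀ s : ℝ, (∫⁻ p, E (p, s) ∂((volume.restrict G).prod (volume.restrict G)))
      = 2 * fracPerim n δ {x ∈ G | s < u x} G := by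
    intro s
    rw [lintegral_prod (fun p => E (p, s)) (hEm.comp measurable_prodMk_right).aemeasurable]
    exact key_slice n δ hδ.le G hG u hu s
  rw [h3, lintegral_congr h4, lintegral_const_mul' 2 _ (by norm_num)]
end

section
/- If G ⊂ ℝⁿ is open, 0 < δ < 1, 1 ≤ q < ∞, C > 0, and the fractional Sobolev inequality (∫_G |u|^q dx)^{1/q} ≤ C|u|_{W^{δ,1}(G)} holds for all measurable u: G → ℝ with compact support in G, then the fractional isocapacitary inequality |K|^{1/q} ≤ C·cap_{δ,1}(K,G) holds for every compact K ⊂ G. -/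
open MeasureTheory Set Metric Filter
open scoped ENNReal Topology

theorem sobolev_implies_isocapacitary (n : ℕ) (δ q C : ℝ)
    (hδ : 0 < δ) (hδ1 : δ < 1) (hq : 1 ≤ q) (hC : 0 < C)
    (G : Set (EuclideanSpace ℝ (Fin n))) (hG : IsOpen G)
    (hsob : ∀ u : EuclideanSpace ℝ (Fin n) → ℝ, Measurable u → HasCompactSupport u → tsupport u ⊆ G →
      (∫⁻ x in G, ENNReal.ofReal (|u x| ^ q)) ^ (1 / q) ≤
        ENNReal.ofReal C * fracSemi n δ G u) :
    ∀ K : Set (EuclideanSpace ℝ (Fin n)), IsCompact K → K ⊆ G →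
      volume K ^ (1 / q) ≤ ENNReal.ofReal C * fracCap n δ K G := by
  intro K hK hKG
  have hC0 : ENNReal.ofReal C ≠ 0 := by simp [ENNReal.ofReal_eq_zero, not_le, hC]
  have hCtop : ENNReal.ofReal C ≠ ∞ := ENNReal.ofReal_ne_top
  rw [fracCap, ENNReal.mul_iInf_of_ne hC0 hCtop]
  refine le_iInf fun u => ?_
  rw [ENNReal.mul_iInf_of_ne hC0 hCtop]
  refine le_iInf fun hu => ?_
  obtain ⟨hcont, hcs, hsupp, hK1⟩ := hu
  have h1 : volume K ≤ ∫⁻ x in G, ENNReal.ofReal (|u x| ^ q) := by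
    calc volume K = ∫⁻ _ in K, 1 := by simp
    _ ≤ ∫⁻ x in K, ENNReal.ofReal (|u x| ^ q) := by
        refine setLIntegral_mono' hK.measurableSet fun x hx => ?_
        have h1x : (1 : ℝ) ≤ u x := hK1 x hx
        have : (1 : ℝ) ≤ |u x| ^ q := by
          apply Real.one_le_rpow (by rw [abs_of_nonneg (by linarith)]; exact h1x) (by linarith)
        simpa using ENNReal.ofReal_le_ofReal this
    _ ≤ ∫⁻ x in G, ENNReal.ofReal (|u x| ^ q) := lintegral_mono_set hKG
  calc volume K ^ (1 / q)
      ≤ (∫⁻ x in G, ENNReal.ofReal (|u x| ^ q)) ^ (1 / q) :=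
        ENNReal.rpow_le_rpow h1 (by positivity)
    _ ≤ ENNReal.ofReal C * fracSemi n δ G u :=
        hsob u hcont.measurable hcs hsupp
end

section
/- If G ⊂ ℝⁿ is open, 0 < p < ∞, 0 < δ < 1, K ⊂ G is compact, and u: G → ℝ is measurable with ∫_G∫_G |u(x)−u(y)|^p/|x−y|^{n+δp} dy dx < ∞, then u ∈ L^p(K). -/
open MeasureTheory Set Metric Filter
open scoped ENNReal Topology

private lemma rpow_add_le (a b p : ℝ) (ha : 0 ≤ a) (hb : 0 ≤ b) (hp : 0 < p) :
    (a + b) ^ p ≤ 2 ^ p * (a ^ p + b ^ p) := by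
  have h1 : a + b ≤ 2 * max a b := by
    rcases le_total a b with h | h <;> simp [max_eq_right, max_eq_left, h] <;> nlinarith
  calc (a + b) ^ p ≤ (2 * max a b) ^ p :=
        Real.rpow_le_rpow (by positivity) h1 hp.le
    _ = 2 ^ p * (max a b) ^ p := Real.mul_rpow (by norm_num) (le_max_of_le_left ha)
    _ ≤ 2 ^ p * (a ^ p + b ^ p) := by
        gcongr
        rcases le_total a b with h | h
        · rw [max_eq_right h]; nlinarith [Real.rpow_nonneg ha p]
        · rw [max_eq_left h]; nlinarith [Real.rpow_nonneg hb p]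

theorem local_integrability (n : ℕ) (p δ : ℝ) (hp : 0 < p)
    (hδ : 0 < δ) (hδ1 : δ < 1)
    (G K : Set (EuclideanSpace ℝ (Fin n))) (hG : IsOpen G) (hK : IsCompact K) (hKG : K ⊆ G)
    (u : EuclideanSpace ℝ (Fin n) → ℝ) (hu : Measurable u)
    (hfin : ∫⁻ x in G, ∫⁻ y in G,
      ENNReal.ofReal (|u x - u y| ^ p / ‖x - y‖ ^ ((n : ℝ) + δ * p)) < ⊤) :
    MemLp u (ENNReal.ofReal p) (volume.restrict K) := by
  have hGm : MeasurableSet G := hG.measurableSet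
  have hKm : MeasurableSet K := hK.measurableSet
  set e : ℝ := (n : ℝ) + δ * p with he
  have he0 : 0 < e := by positivity
  by_cases hG0 : volume G = 0
  · have hz : volume.restrict K = 0 := by
      rw [Measure.restrict_eq_zero]
      exact measure_mono_null hKG hG0
    rw [hz]
    exact ⟨hu.aestronglyMeasurable, by simp⟩
  -- find a good point x₀
  have hker : Measurable (fun q : EuclideanSpace ℝ (Fin n) × EuclideanSpace ℝ (Fin n) =>
      ENNReal.ofReal (|u q.1 - u q.2| ^ p / ‖q.1 - q.2‖ ^ e)) := by
    apply ENNReal.measurable_ofReal.comp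
    apply Measurable.div
    · exact (((hu.comp measurable_fst).sub (hu.comp measurable_snd)).abs).pow measurable_const
    · exact ((measurable_fst.sub measurable_snd).norm).pow measurable_const
  have hF : Measurable (fun x => ∫⁻ y in G,
      ENNReal.ofReal (|u x - u y| ^ p / ‖x - y‖ ^ e)) :=
    Measurable.lintegral_prod_right' hker
  have hae : ∀ᵐ x ∂(volume.restrict G),
      (∫⁻ y in G, ENNReal.ofReal (|u x - u y| ^ p / ‖x - y‖ ^ e)) < ⊤ :=
    ae_lt_top hF hfin.ne
  have hne : volume.restrict G ≠ 0 := by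
    simpa [Measure.restrict_eq_zero] using hG0
  have : (ae (volume.restrict G)).NeBot := ae_neBot.mpr hne
  obtain ⟨x₀, hx₀fin, hx₀G⟩ := (hae.and (ae_restrict_mem hGm)).exists
  -- choose R
  obtain ⟨R, hR⟩ := hK.isBounded.subset_closedBall x₀
  set R' : ℝ := max R 1 with hR'
  have hR'1 : (1 : ℝ) ≤ R' := le_max_right _ _
  have hRy : ∀ y ∈ K, ‖x₀ - y‖ ≤ R' := by
    intro y hy
    have := hR hy
    rw [mem_closedBall, dist_eq_norm] at this
    calc ‖x₀ - y‖ = ‖y - x₀‖ := norm_sub_rev _ _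
      _ ≤ R := this
      _ ≤ R' := le_max_left _ _
  -- pointwise bound on K
  have hpt : ∀ y ∈ K, ENNReal.ofReal (|u x₀ - u y| ^ p) ≤
      ENNReal.ofReal (R' ^ e) * ENNReal.ofReal (|u x₀ - u y| ^ p / ‖x₀ - y‖ ^ e) := by
    intro y hy
    rw [← ENNReal.ofReal_mul (by positivity)]
    apply ENNReal.ofReal_le_ofReal
    rcases eq_or_ne (‖x₀ - y‖) 0 with hb | hb
    · have hxy : x₀ = y := by
        rwa [norm_eq_zero, sub_eq_zero] at hb
      rw [hxy, sub_self, abs_zero, Real.zero_rpow hp.ne']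
      positivity
    · have hb0 : 0 < ‖x₀ - y‖ := lt_of_le_of_ne (norm_nonneg _) (Ne.symm hb)
      have hbe : 0 < ‖x₀ - y‖ ^ e := Real.rpow_pos_of_pos hb0 e
      calc |u x₀ - u y| ^ p = |u x₀ - u y| ^ p / ‖x₀ - y‖ ^ e * ‖x₀ - y‖ ^ e :=
            (div_mul_cancel₀ _ hbe.ne').symm
        _ ≤ |u x₀ - u y| ^ p / ‖x₀ - y‖ ^ e * R' ^ e :=
            mul_le_mul_of_nonneg_left
              (Real.rpow_le_rpow hb0.le (hRy y hy) he0.le) (by positivity)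
        _ = R' ^ e * (|u x₀ - u y| ^ p / ‖x₀ - y‖ ^ e) := mul_comm _ _
  -- the difference is integrable on K
  have h1 : (∫⁻ y in K, ENNReal.ofReal (|u x₀ - u y| ^ p)) < ⊤ := by
    calc (∫⁻ y in K, ENNReal.ofReal (|u x₀ - u y| ^ p))
        ≤ ∫⁻ y in K, ENNReal.ofReal (R' ^ e) *
            ENNReal.ofReal (|u x₀ - u y| ^ p / ‖x₀ - y‖ ^ e) := by
          apply setLIntegral_mono' hKm
          exact hpt
      _ = ENNReal.ofReal (R' ^ e) *
            ∫⁻ y in K, ENNReal.ofReal (|u x₀ - u y| ^ p / ‖x₀ - y‖ ^ e) :=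
          lintegral_const_mul' _ _ ENNReal.ofReal_ne_top
      _ ≤ ENNReal.ofReal (R' ^ e) *
            ∫⁻ y in G, ENNReal.ofReal (|u x₀ - u y| ^ p / ‖x₀ - y‖ ^ e) := by
          gcongr
      _ < ⊤ := ENNReal.mul_lt_top ENNReal.ofReal_lt_top hx₀fin
  -- conclude
  refine ⟨hu.aestronglyMeasurable, ?_⟩
  rw [eLpNorm_lt_top_iff_lintegral_rpow_enorm_lt_top
    (by simpa [ENNReal.ofReal_eq_zero] using hp) ENNReal.ofReal_ne_top]
  rw [ENNReal.toReal_ofReal hp.le]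
  have hpt2 : ∀ y, ((‖u y‖₊ : ℝ≥0∞)) ^ p ≤
      ENNReal.ofReal (2 ^ p) *
        (ENNReal.ofReal (|u x₀ - u y| ^ p) + ENNReal.ofReal (|u x₀| ^ p)) := by
    intro y
    have h1 : ((‖u y‖₊ : ℝ≥0∞)) ^ p = ENNReal.ofReal (|u y| ^ p) := by
      rw [← ENNReal.ofReal_rpow_of_nonneg (abs_nonneg _) hp.le,
        ← Real.enorm_eq_ofReal_abs, enorm_eq_nnnorm]
    rw [h1, ← ENNReal.ofReal_add (by positivity) (by positivity),
      ← ENNReal.ofReal_mul (by positivity)]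
    apply ENNReal.ofReal_le_ofReal
    calc |u y| ^ p ≤ (|u x₀ - u y| + |u x₀|) ^ p := by
          apply Real.rpow_le_rpow (abs_nonneg _) _ hp.le
          calc |u y| = |(u x₀ - (u x₀ - u y))| := by ring_nf
            _ ≤ |u x₀ - u y| + |u x₀| := by
                rw [add_comm]
                exact (abs_sub (u x₀) (u x₀ - u y))
      _ ≤ 2 ^ p * (|u x₀ - u y| ^ p + |u x₀| ^ p) :=
          rpow_add_le _ _ _ (abs_nonneg _) (abs_nonneg _) hp
  calc (∫⁻ y in K, ((‖u y‖₊ : ℝ≥0∞)) ^ p)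
      ≤ ∫⁻ y in K, ENNReal.ofReal (2 ^ p) *
          (ENNReal.ofReal (|u x₀ - u y| ^ p) + ENNReal.ofReal (|u x₀| ^ p)) :=
        lintegral_mono fun y => hpt2 y
    _ = ENNReal.ofReal (2 ^ p) *
          ((∫⁻ y in K, ENNReal.ofReal (|u x₀ - u y| ^ p)) +
            (volume K) * ENNReal.ofReal (|u x₀| ^ p)) := by
        rw [lintegral_const_mul' _ _ ENNReal.ofReal_ne_top]
        congr 1
        rw [lintegral_add_right' _ aemeasurable_const]
        congr 1
        rw [setLIntegral_const]
        ring
    _ < ⊤ := by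
        apply ENNReal.mul_lt_top ENNReal.ofReal_lt_top
        apply ENNReal.add_lt_top.mpr
        exact ⟨h1, ENNReal.mul_lt_top hK.measure_lt_top ENNReal.ofReal_lt_top⟩
end
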